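/- arXiv:2006.07372 — 2 statements merged into one kernel-verified Lean document; each statement's English description precedes it below -/
import Mathlib

section
/- For every Borel probability measure P on ℝ, every 1 ≤ p < ∞, every M ≥ 0, every X ∈ L^p(ℝ, Borel, P), and every ε > 0, there exists a bounded Borel function Y : ℝ → ℝ such that ‖Y − X‖_{L^p(P)} < ε, Y is differentiable at all points of ℝ outside a countable set, and |Y'(x)| > M at every point x where Y is differentiable. -/
open MeasureTheory Set Filter
open scoped Convolution ENNReal

noncomputable def saw (c K : ℝ) (x : ℝ) : ℝ := K * |x - c * round (x / c)|

lemma measurable_saw (c K : ℝ) : Measurable (saw c K) := by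
  have h1 : Measurable fun x : ℝ => round (x / c) := by
    simp only [round_eq]
    exact ((measurable_id.div_const c).add_const _).floor
  have h2 : Measurable fun x : ℝ => ((round (x / c) : ℤ) : ℝ) :=
    Measurable.comp (measurable_from_top) h1
  exact ((measurable_id.sub (h2.const_mul c)).abs).const_mul K

lemma abs_saw_le {c K : ℝ} (hc : 0 < c) (hK : 0 ≤ K) (x : ℝ) : |saw c K x| ≤ K * c := by
  have h1 : |x / c - round (x / c)| ≤ 1 / 2 := abs_sub_round _
  have h0 : x - c * round (x / c) = c * (x / c - round (x / c)) := by field_simp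
  unfold saw
  rw [abs_mul, abs_of_nonneg hK, abs_abs, h0, abs_mul, abs_of_pos hc]
  nlinarith [mul_le_mul_of_nonneg_left h1 (mul_nonneg hK hc.le), abs_nonneg (x / c - (round (x / c) : ℝ))]

lemma round_eq_of_mem {t : ℝ} {n : ℤ} (h : t ∈ Ioo ((n : ℝ) - 1/2) ((n : ℝ) + 1/2)) :
    round t = n := by
  rw [round_eq, Int.floor_eq_iff]
  constructor
  · linarith [h.1]
  · push_cast
    linarith [h.2]

lemma saw_eventuallyEq (c K : ℝ) {x : ℝ} {n : ℤ}
    (h : x / c ∈ Ioo ((n : ℝ) - 1/2) ((n : ℝ) + 1/2)) :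
    saw c K =ᶠ[nhds x] fun y => K * |y - c * n| := by
  have hopen : IsOpen {y : ℝ | y / c ∈ Ioo ((n : ℝ) - 1/2) ((n : ℝ) + 1/2)} :=
    isOpen_Ioo.preimage (continuous_id.div_const c)
  filter_upwards [hopen.mem_nhds h] with y hy
  unfold saw
  rw [round_eq_of_mem hy]

lemma saw_eq_near_mid {c K : ℝ} (hc : 0 < c) {y : ℝ} {n : ℤ}
    (h : y / c ∈ Ioo (n : ℝ) ((n : ℝ) + 1)) :
    saw c K y = -K * |y - c * ((n : ℝ) + 1/2)| + K * (c/2) := by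
  have hy0 : c * n < y := by
    have := (lt_div_iff₀ hc).1 h.1
    linarith
  have hy1 : y < c * ((n : ℝ) + 1) := by
    have := (div_lt_iff₀ hc).1 h.2
    linarith
  rcases lt_or_ge (y / c) ((n : ℝ) + 1/2) with hlt | hge
  · have hy2 : y < c * ((n : ℝ) + 1/2) := by
      have := (div_lt_iff₀ hc).1 hlt
      linarith
    have hr : round (y / c) = n := round_eq_of_mem ⟨by linarith [h.1], by linarith⟩
    unfold saw
    rw [hr, abs_of_pos (by linarith), abs_of_neg (by linarith)]
    ring
  · have hy2 : c * ((n : ℝ) + 1/2) ≤ y := by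
      have := (le_div_iff₀ hc).1 hge
      linarith
    have hr : round (y / c) = n + 1 := by
      rcases eq_or_lt_of_le hge with heq | hlt2
      · rw [round_eq]
        have : y / c + 1/2 = ((n + 1 : ℤ) : ℝ) := by push_cast; linarith
        rw [this, Int.floor_intCast]
      · refine round_eq_of_mem ⟨?_, ?_⟩ <;> push_cast
        · linarith
        · linarith [h.2]
    unfold saw
    rw [hr]
    push_cast
    rw [abs_of_neg (by linarith), abs_of_nonneg (by linarith)]
    ring

lemma not_diff_linabs {a : ℝ} (b d : ℝ) (ha : a ≠ 0) :
    ¬ DifferentiableAt ℝ (fun y => a * |y - b| + d) b := by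
  intro hdiff
  have h1 : DifferentiableAt ℝ (fun y : ℝ => a⁻¹ * ((a * |y - b| + d) - d)) b :=
    (hdiff.sub_const d).const_mul a⁻¹
  have h2 : (fun y : ℝ => a⁻¹ * ((a * |y - b| + d) - d)) = fun y => |y - b| := by
    funext y
    field_simp
    ring
  rw [h2] at h1
  have h1' : DifferentiableAt ℝ (fun y : ℝ => |y - b|) (0 + b) := by rwa [zero_add]
  have h3 : DifferentiableAt ℝ (fun t : ℝ => |t + b - b|) 0 :=
    h1'.comp (0 : ℝ) ((differentiableAt_id).add_const b)
  have h4 : (fun t : ℝ => |t + b - b|) = (abs : ℝ → ℝ) := by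
    funext t
    simp
  rw [h4] at h3
  exact not_differentiableAt_abs_zero h3

lemma saw_hasDerivAt {c K : ℝ} (hc : 0 < c) {x : ℝ}
    (hx : ∀ n : ℤ, x ≠ c * n ∧ x ≠ c * ((n : ℝ) + 1/2)) :
    ∃ d : ℝ, HasDerivAt (saw c K) d x ∧ |d| = |K| := by
  set n : ℤ := round (x / c) with hn
  have h1 : |x / c - n| ≤ 1 / 2 := abs_sub_round _
  have hne1 : x / c - n ≠ 1/2 := by
    intro hcontra
    exact (hx n).2 (by field_simp at hcontra ⊢; linarith)
  have hne2 : x / c - n ≠ -(1/2) := by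
    intro hcontra
    refine (hx (n - 1)).2 ?_
    push_cast
    field_simp at hcontra ⊢
    linarith
  have hmem : x / c ∈ Ioo ((n : ℝ) - 1/2) ((n : ℝ) + 1/2) := by
    rw [abs_le] at h1
    constructor
    · rcases lt_or_eq_of_le h1.1 with h | h
      · linarith
      · exact absurd h.symm hne2
    · rcases lt_or_eq_of_le h1.2 with h | h
      · linarith
      · exact absurd h hne1
  have hxb : x ≠ c * n := (hx n).1
  have heq := saw_eventuallyEq c K hmem
  rcases lt_or_gt_of_ne hxb with hlt | hgt
  · -- x < c * n : locally saw y = K * (c*n - y), derivative -K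
    refine ⟨-K, ?_, by rw [abs_neg]⟩
    have hmodel : HasDerivAt (fun y : ℝ => K * ((c * n) - y)) (-K) x := by
      simpa using ((hasDerivAt_id x).const_sub (c * (n:ℝ))).const_mul K
    apply hmodel.congr_of_eventuallyEq
    have hopen : IsOpen {y : ℝ | y < c * n} := isOpen_Iio
    filter_upwards [heq, hopen.mem_nhds hlt] with y hy hylt
    rw [hy, abs_of_neg (by linarith : y - c * (n:ℝ) < 0)]
    ring
  · refine ⟨K, ?_, rfl⟩
    have hmodel : HasDerivAt (fun y : ℝ => K * (y - c * n)) K x := by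
      simpa using ((hasDerivAt_id x).sub_const (c * (n:ℝ))).const_mul K
    apply hmodel.congr_of_eventuallyEq
    have hopen : IsOpen {y : ℝ | c * n < y} := isOpen_Ioi
    filter_upwards [heq, hopen.mem_nhds hgt] with y hy hylt
    rw [hy, abs_of_pos (by linarith : (0:ℝ) < y - c * (n:ℝ))]

lemma saw_not_diff_int {c K : ℝ} (hc : 0 < c) (hK : K ≠ 0) (n : ℤ) :
    ¬ DifferentiableAt ℝ (saw c K) (c * n) := by
  intro hdiff
  have hmem : (c * n) / c ∈ Ioo ((n : ℝ) - 1/2) ((n : ℝ) + 1/2) := by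
    rw [mul_div_cancel_left₀ _ hc.ne']
    constructor
    · simp
    · simp
  have heq := saw_eventuallyEq c K hmem
  have h2 : DifferentiableAt ℝ (fun y : ℝ => K * |y - c * n|) (c * n) :=
    (heq.differentiableAt_iff).1 hdiff
  have h3 : DifferentiableAt ℝ (fun y : ℝ => K * |y - c * n| + 0) (c * n) := by
    simpa using h2
  exact not_diff_linabs (c * (n:ℝ)) 0 hK h3

lemma saw_not_diff_mid {c K : ℝ} (hc : 0 < c) (hK : K ≠ 0) (n : ℤ) :
    ¬ DifferentiableAt ℝ (saw c K) (c * ((n : ℝ) + 1/2)) := by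
  intro hdiff
  set m : ℝ := c * ((n : ℝ) + 1/2) with hm
  have hopen : IsOpen {y : ℝ | y / c ∈ Ioo (n : ℝ) ((n : ℝ) + 1)} :=
    isOpen_Ioo.preimage (continuous_id.div_const c)
  have hmemm : m ∈ {y : ℝ | y / c ∈ Ioo (n : ℝ) ((n : ℝ) + 1)} := by
    show m / c ∈ Ioo (n : ℝ) ((n : ℝ) + 1)
    have hmc : m / c = (n : ℝ) + 1/2 := by
      rw [hm]
      field_simp
    rw [hmc]
    constructor
    · linarith
    · linarith
  have heq : saw c K =ᶠ[nhds m] fun y => -K * |y - m| + K * (c/2) := by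
    filter_upwards [hopen.mem_nhds hmemm] with y hy
    exact saw_eq_near_mid hc hy
  have h2 : DifferentiableAt ℝ (fun y : ℝ => -K * |y - m| + K * (c/2)) m :=
    (heq.differentiableAt_iff).1 hdiff
  exact not_diff_linabs m (K * (c/2)) (neg_ne_zero.2 hK) h2

theorem stmt_7 (P : Measure ℝ) [IsProbabilityMeasure P]
    (p : ℝ) (hp : 1 ≤ p) (M : ℝ) (hM : 0 ≤ M)
    (X : ℝ → ℝ) (hX : MemLp X (ENNReal.ofReal p) P)
    (ε : ℝ) (hε : 0 < ε) :
    ∃ Y : ℝ → ℝ, Measurable Y ∧ (∃ C : ℝ, ∀ x, |Y x| ≤ C) ∧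
      eLpNorm (Y - X) (ENNReal.ofReal p) P < ENNReal.ofReal ε ∧
      (∃ S : Set ℝ, S.Countable ∧ ∀ x ∉ S, DifferentiableAt ℝ Y x) ∧
      (∀ x : ℝ, DifferentiableAt ℝ Y x → |deriv Y x| > M) := by
  -- Step 1: continuous compactly supported approximation
  obtain ⟨g, g_supp, hg_close, g_cont, -⟩ :=
    hX.exists_hasCompactSupport_eLpNorm_sub_le (p := ENNReal.ofReal p)
      ENNReal.ofReal_ne_top (ε := ENNReal.ofReal (ε/4))
      (by simp [ENNReal.ofReal_eq_zero]; linarith)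
  -- Step 2: smooth it by convolution with a bump
  obtain ⟨δ, hδ, hδg⟩ := (Metric.uniformContinuous_iff).1
    (g_supp.uniformContinuous_of_continuous g_cont) (ε/8) (by linarith)
  set φ : ContDiffBump (0:ℝ) := ⟨δ/2, δ, by linarith, by linarith⟩ with hφ
  set h : ℝ → ℝ := φ.normed volume ⋆[ContinuousLinearMap.lsmul ℝ ℝ, volume] g with hh
  have h_smooth : ContDiff ℝ (⊤:ℕ∞) h :=
    HasCompactSupport.contDiff_convolution_left _ φ.hasCompactSupport_normed
      φ.contDiff_normed g_cont.locallyIntegrable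
  have h_supp : HasCompactSupport h :=
    HasCompactSupport.convolution _ φ.hasCompactSupport_normed g_supp
  have h_close : ∀ x, |h x - g x| ≤ ε/8 := by
    intro x
    rw [← Real.dist_eq]
    refine φ.dist_normed_convolution_le g_cont.aestronglyMeasurable (fun y hy => ?_)
    exact le_of_lt (hδg (by simpa [hφ] using hy))
  -- Bounds on h and its derivative
  obtain ⟨C₁, hC₁⟩ := h_supp.exists_bound_of_continuous h_smooth.continuous
  obtain ⟨L, hL⟩ := h_supp.deriv.exists_bound_of_continuous
    (h_smooth.continuous_deriv (by exact_mod_cast le_top))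
  have hL0 : 0 ≤ L := le_trans (norm_nonneg _) (hL 0)
  -- Parameters for the sawtooth
  set K : ℝ := M + L + 1 with hK
  have hK0 : 0 < K := by positivity
  set c : ℝ := ε / (8 * K) with hc
  have hc0 : 0 < c := by positivity
  have hKc : K * c = ε / 8 := by
    rw [hc]
    field_simp
  -- The approximating function
  set Y : ℝ → ℝ := fun x => h x + saw c K x with hY
  have h_diff : ∀ x, HasDerivAt h (deriv h x) x :=
    fun x => ((h_smooth.differentiable (by simp)) x).hasDerivAt
  refine ⟨Y, ?_, ⟨C₁ + K * c, ?_⟩, ?_, ?_, ?_⟩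
  · exact (h_smooth.continuous.measurable).add (measurable_saw c K)
  · intro x
    calc |Y x| ≤ |h x| + |saw c K x| := abs_add_le _ _
      _ ≤ C₁ + K * c := by
          refine add_le_add ?_ (abs_saw_le hc0 hK0.le x)
          simpa [Real.norm_eq_abs] using hC₁ x
  · -- L^p estimate
    have hfuneq : Y - X = (fun x => (h x - g x) + saw c K x) + fun x => g x - X x := by
      funext x
      simp [hY]
      ring
    have hone : (1:ℝ≥0∞) ≤ ENNReal.ofReal p := by
      simpa using ENNReal.ofReal_le_ofReal hp
    have bound1 : eLpNorm (fun x => h x - g x) (ENNReal.ofReal p) P ≤ ENNReal.ofReal (ε/8) := by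
      have := eLpNorm_le_of_ae_bound (μ := P) (p := ENNReal.ofReal p)
        (f := fun x => h x - g x) (C := ε/8)
        (Eventually.of_forall fun x => by simpa [Real.norm_eq_abs] using h_close x)
      simpa using this
    have bound2 : eLpNorm (saw c K) (ENNReal.ofReal p) P ≤ ENNReal.ofReal (ε/8) := by
      have := eLpNorm_le_of_ae_bound (μ := P) (p := ENNReal.ofReal p)
        (f := saw c K) (C := ε/8)
        (Eventually.of_forall fun x => by
          simpa [Real.norm_eq_abs, hKc] using abs_saw_le hc0 hK0.le x)
      simpa using this
    have bound3 : eLpNorm (fun x => g x - X x) (ENNReal.ofReal p) P ≤ ENNReal.ofReal (ε/4) := by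
      have : (fun x => g x - X x) = -(X - g) := by funext x; simp
      rw [this, eLpNorm_neg]
      exact hg_close
    have meas1 : AEStronglyMeasurable (fun x => h x - g x) P :=
      ((h_smooth.continuous.sub g_cont).aestronglyMeasurable)
    have meas2 : AEStronglyMeasurable (saw c K) P := (measurable_saw c K).aestronglyMeasurable
    calc eLpNorm (Y - X) (ENNReal.ofReal p) P
        ≤ eLpNorm (fun x => (h x - g x) + saw c K x) (ENNReal.ofReal p) P
          + eLpNorm (fun x => g x - X x) (ENNReal.ofReal p) P := by
          rw [hfuneq]
          exact eLpNorm_add_le (meas1.add meas2)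
            (g_cont.aestronglyMeasurable.sub hX.aestronglyMeasurable) hone
      _ ≤ (eLpNorm (fun x => h x - g x) (ENNReal.ofReal p) P
          + eLpNorm (saw c K) (ENNReal.ofReal p) P)
          + eLpNorm (fun x => g x - X x) (ENNReal.ofReal p) P := by
          gcongr
          exact eLpNorm_add_le meas1 meas2 hone
      _ ≤ ENNReal.ofReal (ε/8) + ENNReal.ofReal (ε/8) + ENNReal.ofReal (ε/4) := by
          gcongr
      _ = ENNReal.ofReal (ε/2) := by
          rw [← ENNReal.ofReal_add (by linarith) (by linarith),
            ← ENNReal.ofReal_add (by linarith) (by linarith)]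
          congr 1
          ring
      _ < ENNReal.ofReal ε := by
          rw [ENNReal.ofReal_lt_ofReal_iff hε]
          linarith
  · -- differentiability outside a countable set
    refine ⟨(range fun n : ℤ => c * n) ∪ (range fun n : ℤ => c * ((n:ℝ) + 1/2)),
      (countable_range _).union (countable_range _), ?_⟩
    intro x hx
    have hx' : ∀ n : ℤ, x ≠ c * n ∧ x ≠ c * ((n:ℝ) + 1/2) := by
      intro n
      constructor
      · intro hcontra
        exact hx (Or.inl ⟨n, hcontra.symm⟩)
      · intro hcontra
        exact hx (Or.inr ⟨n, hcontra.symm⟩)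
    obtain ⟨d, hd, -⟩ := saw_hasDerivAt (K := K) hc0 hx'
    exact ((h_diff x).add hd).differentiableAt
  · -- derivative is large
    intro x hdiffY
    by_cases hxS : ∀ n : ℤ, x ≠ c * n ∧ x ≠ c * ((n:ℝ) + 1/2)
    · obtain ⟨d, hd, habs⟩ := saw_hasDerivAt (K := K) hc0 hxS
      have hYd : HasDerivAt Y (deriv h x + d) x := (h_diff x).add hd
      rw [hYd.deriv]
      have h1 : |deriv h x| ≤ L := by simpa [Real.norm_eq_abs] using hL x
      have h2 : |d| = K := by rw [habs, abs_of_pos hK0]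
      have : K - L ≤ |deriv h x + d| := by
        calc K - L ≤ |d| - |deriv h x| := by rw [h2]; linarith
          _ ≤ |deriv h x + d| := by
              have := abs_sub_abs_le_abs_sub d (-(deriv h x))
              simp only [abs_neg, sub_neg_eq_add] at this
              calc |d| - |deriv h x| ≤ |d + deriv h x| := this
                _ = |deriv h x + d| := by rw [add_comm]
      linarith [this]
    · -- x is a kink point: contradiction
      push_neg at hxS
      obtain ⟨n, hn⟩ := hxS
      have hsawdiff : DifferentiableAt ℝ (saw c K) x := by
        have : saw c K = fun y => Y y - h y := by
          funext y
          simp [hY]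
        rw [this]
        exact hdiffY.sub ((h_diff x).differentiableAt)
      rcases Classical.em (x = c * n) with hcase | hcase
      · exact absurd hsawdiff (by rw [hcase]; exact saw_not_diff_int hc0 hK0.ne' n)
      · have hx2 := hn hcase
        exact absurd hsawdiff (by rw [hx2]; exact saw_not_diff_mid hc0 hK0.ne' n)
end

section
/- Let P be any finite Borel measure on ℝ (not necessarily a probability measure), 1 ≤ p < ∞, and M ≥ 0. Then the set of bounded Borel functions Y : ℝ → ℝ that are differentiable Lebesgue-almost everywhere with |Y'| > M at every point of differentiability is dense in L^p(ℝ, Borel, P). -/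
open MeasureTheory Filter Set

noncomputable section

namespace Stmt14Aux

/-- Triangle wave: distance from `Int.fract x` to `1/2`. Slopes `±1`, kinks on `(1/2)ℤ`. -/
def T (x : ℝ) : ℝ := |Int.fract x - 1/2|

lemma T_nonneg (x : ℝ) : 0 ≤ T x := abs_nonneg _

lemma T_le (x : ℝ) : T x ≤ 1/2 := by
  have h1 := Int.fract_nonneg x
  have h2 := Int.fract_lt_one x
  rw [T, abs_le]; constructor <;> linarith

lemma measurable_T : Measurable T := (measurable_fract.sub measurable_const).abs

lemma T_eq_of_floor (n : ℤ) (y : ℝ) (h1 : (n:ℝ) ≤ y) (h2 : y < n+1) :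
    T y = |y - n - 1/2| := by
  have hfl : ⌊y⌋ = n := Int.floor_eq_iff.2 ⟨h1, by exact_mod_cast h2⟩
  have : Int.fract y = y - n := by
    rw [← Int.self_sub_floor, hfl]
  rw [T, this]

lemma hasDerivAt_T (x : ℝ) (h0 : Int.fract x ≠ 0) (hh : Int.fract x ≠ 1/2) :
    ∃ s : ℝ, |s| = 1 ∧ HasDerivAt T s x := by
  set n := ⌊x⌋ with hn
  have hfr : Int.fract x = x - n := (Int.self_sub_floor x).symm
  have h1 : (n:ℝ) ≤ x := Int.floor_le x
  have h1' : (n:ℝ) < x := lt_of_le_of_ne h1 (fun h => h0 (by rw [hfr, ← h, sub_self]))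
  have h2 : x < n + 1 := Int.lt_floor_add_one x
  rcases lt_trichotomy (x - (n:ℝ)) (1/2) with hlt | heq | hgt
  · refine ⟨-1, by norm_num, ?_⟩
    have hev : T =ᶠ[nhds x] fun y => (1/2 : ℝ) - (y - n) := by
      filter_upwards [Ioo_mem_nhds h1' (show x < (n:ℝ) + 1/2 by linarith)] with y hy
      rw [T_eq_of_floor n y hy.1.le (by linarith [hy.2]),
        abs_of_nonpos (by linarith [hy.2])]
      ring
    have hd : HasDerivAt (fun y : ℝ => (1/2:ℝ) - (y - n)) (-1) x := by
      simpa using ((hasDerivAt_id x).sub_const (n:ℝ)).const_sub (1/2:ℝ)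
    exact hd.congr_of_eventuallyEq hev
  · exact absurd (by rw [hfr, heq]) hh
  · refine ⟨1, by norm_num, ?_⟩
    have hev : T =ᶠ[nhds x] fun y => (y - n) - 1/2 := by
      filter_upwards [Ioo_mem_nhds (show (n:ℝ) + 1/2 < x by linarith) h2] with y hy
      rw [T_eq_of_floor n y (by linarith [hy.1]) hy.2,
        abs_of_nonneg (by linarith [hy.1])]
    have hd : HasDerivAt (fun y : ℝ => (y - (n:ℝ)) - 1/2) 1 x := by
      simpa using ((hasDerivAt_id x).sub_const (n:ℝ)).sub_const (1/2:ℝ)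
    exact hd.congr_of_eventuallyEq hev

lemma T_kink0 (x : ℝ) (hx : Int.fract x = 0) :
    ∀ᶠ y in nhds x, T y = 1/2 - |y - x| := by
  have hxn : x = (⌊x⌋:ℝ) := by
    have := Int.self_sub_floor x
    rw [hx] at this; linarith [this.symm]
  set n := ⌊x⌋ with hn
  filter_upwards [Ioo_mem_nhds (show x - 1/2 < x by linarith) (show x < x + 1/2 by linarith)]
    with y hy
  rcases le_or_gt x y with h | h
  · rw [T_eq_of_floor n y (by linarith [hxn]) (by linarith [hy.2, hxn]),
      ← hxn, abs_of_nonpos (by linarith [hy.2]), abs_of_nonneg (by linarith)]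
    ring
  · rw [T_eq_of_floor (n-1) y (by push_cast; linarith [hy.1, hxn])
      (by push_cast; linarith [h, hxn])]
    push_cast
    rw [← hxn, abs_of_nonneg (by linarith [hy.1]), abs_of_nonpos (by linarith)]
    ring

lemma T_kink_half (x : ℝ) (hx : Int.fract x = 1/2) :
    ∀ᶠ y in nhds x, T y = |y - x| := by
  set n := ⌊x⌋ with hn
  have hxn : x = (n:ℝ) + 1/2 := by
    have := Int.self_sub_floor x
    rw [hx] at this; linarith [this.symm]
  filter_upwards [Ioo_mem_nhds (show x - 1/2 < x by linarith) (show x < x + 1/2 by linarith)]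
    with y hy
  rw [T_eq_of_floor n y (by rw [hxn] at hy; linarith [hy.1]) (by rw [hxn] at hy; linarith [hy.2])]
  congr 1
  rw [hxn]; ring

lemma not_diff_abs (x : ℝ) : ¬ DifferentiableAt ℝ (fun y : ℝ => |y - x|) x := by
  intro h
  have h2 : DifferentiableAt ℝ (fun z : ℝ => |z|) 0 := by
    have h3 := DifferentiableAt.comp (0:ℝ)
      (by simpa using h : DifferentiableAt ℝ (fun y : ℝ => |y - x|) ((fun z : ℝ => z + x) 0))
      (differentiableAt_fun_id.add_const x)
    have h4 : (fun y : ℝ => |y - x|) ∘ (fun y : ℝ => y + x) = fun z : ℝ => |z| := by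
      funext z; simp
    rwa [h4] at h3
  exact not_differentiableAt_abs_zero h2

end Stmt14Aux

end

open Stmt14Aux ENNReal in
open scoped Convolution in
theorem stmt_14 (P : Measure ℝ) [IsFiniteMeasure P]
    (p : ℝ) (hp : 1 ≤ p) (M : ℝ) (hM : 0 ≤ M)
    (X : ℝ → ℝ) (hX : MemLp X (ENNReal.ofReal p) P)
    (ε : ℝ) (hε : 0 < ε) :
    ∃ Y : ℝ → ℝ, Measurable Y ∧ (∃ C : ℝ, ∀ x, |Y x| ≤ C) ∧
      (∀ᵐ x ∂(volume : Measure ℝ), DifferentiableAt ℝ Y x) ∧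
      (∀ x : ℝ, DifferentiableAt ℝ Y x → |deriv Y x| > M) ∧
      eLpNorm (Y - X) (ENNReal.ofReal p) P < ENNReal.ofReal ε := by
  classical
  set q : ℝ≥0∞ := ENNReal.ofReal p with hq
  have hq1 : 1 ≤ q := ENNReal.one_le_ofReal.2 hp
  have hqtop : q ≠ ⊤ := ENNReal.ofReal_ne_top
  -- Step 1: continuous compactly supported approximation
  obtain ⟨f, hfsupp, hfX, hfcont, -⟩ :=
    hX.exists_hasCompactSupport_eLpNorm_sub_le hqtop
      (ε := ENNReal.ofReal (ε/4)) (ENNReal.ofReal_pos.2 (by linarith)).ne'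
  -- quantities for the Lp estimate
  set A : ℝ≥0∞ := P Set.univ ^ q.toReal⁻¹ with hA
  have hAtop : A ≠ ⊤ := (ENNReal.rpow_lt_top_of_nonneg (by positivity) (measure_ne_top P _)).ne
  have hA0 : 0 ≤ A.toReal := ENNReal.toReal_nonneg
  set η : ℝ := (ε/4) / (A.toReal + 1) with hη
  have hηpos : 0 < η := by
    apply div_pos (by linarith) (by linarith)
  -- Step 2: smooth approximation by convolution with a bump
  have hfu : UniformContinuous f :=
    hfcont.uniformContinuous_of_tendsto_cocompact hfsupp.is_zero_at_infty
  obtain ⟨R, hR, hRf⟩ := Metric.uniformContinuous_iff.1 hfu η hηpos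
  set φ : ContDiffBump (0:ℝ) := ⟨R/2, R, by linarith, by linarith⟩ with hφ
  set g : ℝ → ℝ := (φ.normed volume ⋆[ContinuousLinearMap.lsmul ℝ ℝ, volume] f) with hgdef
  have hgsmooth : ContDiff ℝ ((⊤:ℕ∞) : WithTop ℕ∞) g :=
    HasCompactSupport.contDiff_convolution_left _ φ.hasCompactSupport_normed
      φ.contDiff_normed (hfcont.locallyIntegrable)
  have hgcs : HasCompactSupport g :=
    HasCompactSupport.convolution _ φ.hasCompactSupport_normed hfsupp
  have hgdiff : Differentiable ℝ g := hgsmooth.differentiable (by simp)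
  have hgf : ∀ x, |g x - f x| ≤ η := by
    intro x
    have h := φ.dist_normed_convolution_le (g := f) (μ := volume) (x₀ := x)
      hfcont.aestronglyMeasurable
      (fun y hy => (hRf (show dist y x < R from by simpa [φ] using hy)).le)
    simpa [Real.dist_eq, hgdef] using h
  -- bounds on g and deriv g
  obtain ⟨Cg, hCg⟩ := hgcs.exists_bound_of_continuous hgsmooth.continuous
  have hgdc : Continuous (deriv g) := hgsmooth.continuous_deriv (by exact_mod_cast le_top)
  obtain ⟨L₀, hL₀⟩ := hgcs.deriv.exists_bound_of_continuous hgdc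
  set L : ℝ := |L₀| with hL
  have hLb : ∀ x, |deriv g x| ≤ L := fun x => (hL₀ x).trans (le_abs_self _)
  have hL0 : 0 ≤ L := abs_nonneg _
  -- sawtooth parameters
  set K : ℝ := L + M + 1 with hK
  have hKpos : 0 < K := by simp only [hK]; linarith
  set c : ℝ := K / η with hc
  have hcpos : 0 < c := div_pos hKpos hηpos
  have hdc : η * c = K := by
    rw [hc, mul_div_assoc']; exact mul_div_cancel_left₀ K hηpos.ne'
  set Y : ℝ → ℝ := fun x => g x + η * T (c * x) with hY
  have hcne : c ≠ 0 := hcpos.ne'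
  have hsaw : ∀ x : ℝ, Int.fract (c*x) ≠ 0 → Int.fract (c*x) ≠ 1/2 →
      ∃ s : ℝ, |s| = 1 ∧ HasDerivAt Y (deriv g x + K * s) x := by
    intro x h0 hh
    obtain ⟨s, hs1, hTs⟩ := hasDerivAt_T (c*x) h0 hh
    have hc' : HasDerivAt (fun y : ℝ => c * y) c x := by
      simpa using (hasDerivAt_id x).const_mul c
    have h1 : HasDerivAt (fun y => T (c * y)) (s * c) x := hTs.comp x hc'
    have h2 : HasDerivAt (fun y => η * T (c * y)) (η * (s * c)) x := h1.const_mul η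
    have h3 : HasDerivAt Y (deriv g x + η * (s * c)) x := ((hgdiff x).hasDerivAt).add h2
    refine ⟨s, hs1, ?_⟩
    convert h3 using 1
    rw [← hdc]; ring
  have hkink : ∀ x : ℝ, (Int.fract (c*x) = 0 ∨ Int.fract (c*x) = 1/2) →
      ¬ DifferentiableAt ℝ Y x := by
    intro x hx hdiff
    have h1 : DifferentiableAt ℝ (fun y => η * T (c * y)) x := by
      have he : (fun y => η * T (c*y)) = fun y => Y y - g y := by
        funext y; simp only [hY]; ring
      rw [he]; exact hdiff.sub (hgdiff x)
    have htend : Tendsto (fun y : ℝ => c * y) (nhds x) (nhds (c*x)) :=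
      (continuous_const.mul continuous_id).continuousAt
    rcases hx with hx0 | hxh
    · have hev : (fun y : ℝ => η/2 - K * |y - x|) =ᶠ[nhds x] (fun y => η * T (c * y)) := by
        filter_upwards [htend.eventually (T_kink0 (c*x) hx0)] with y hy
        rw [hy, show c * y - c * x = c * (y - x) by ring, abs_mul, abs_of_pos hcpos, ← hdc]
        ring
      have h4 : DifferentiableAt ℝ (fun y : ℝ => η/2 - K * |y - x|) x :=
        h1.congr_of_eventuallyEq hev
      have h5 : DifferentiableAt ℝ (fun y : ℝ => |y - x|) x := by
        have he2 : (fun y : ℝ => |y - x|) = fun y => (η/2 - (η/2 - K * |y - x|)) / K := by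
          funext y; field_simp; ring
        rw [he2]
        exact ((differentiableAt_const _).sub h4).div_const K
      exact not_diff_abs x h5
    · have hev : (fun y : ℝ => K * |y - x|) =ᶠ[nhds x] (fun y => η * T (c * y)) := by
        filter_upwards [htend.eventually (T_kink_half (c*x) hxh)] with y hy
        rw [hy, show c * y - c * x = c * (y - x) by ring, abs_mul, abs_of_pos hcpos, ← hdc]
        ring
      have h4 : DifferentiableAt ℝ (fun y : ℝ => K * |y - x|) x :=
        h1.congr_of_eventuallyEq hev
      have h5 : DifferentiableAt ℝ (fun y : ℝ => |y - x|) x := by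
        have he2 : (fun y : ℝ => |y - x|) = fun y => (K * |y - x|) / K := by
          funext y; field_simp
        rw [he2]; exact h4.div_const K
      exact not_diff_abs x h5
  refine ⟨Y, ?_, ⟨|Cg| + η, ?_⟩, ?_, ?_, ?_⟩
  · exact (hgsmooth.continuous.measurable).add
      ((measurable_T.comp (measurable_id.const_mul c)).const_mul η)
  · intro x
    have h1 : |g x| ≤ |Cg| := by
      have h0 := hCg x
      rw [Real.norm_eq_abs] at h0
      exact h0.trans (le_abs_self _)
    have h2 := T_nonneg (c * x)
    have h3 := T_le (c * x)
    have h5 : |η * T (c * x)| ≤ η := by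
      rw [abs_of_nonneg (by positivity)]
      nlinarith
    calc |Y x| ≤ |g x| + |η * T (c * x)| := abs_add_le _ _
      _ ≤ |Cg| + η := add_le_add h1 h5
  · have hS : volume {x : ℝ | Int.fract (c*x) = 0 ∨ Int.fract (c*x) = 1/2} = 0 := by
      refine measure_mono_null ?_ ((Set.countable_range
        (fun k : ℤ => (k:ℝ)/(2*c))).measure_zero _)
      rintro x (h | h)
      · refine ⟨2 * ⌊c * x⌋, ?_⟩
        have h1 : (⌊c * x⌋ : ℝ) = c * x := by
          have h2 := Int.self_sub_floor (c*x); rw [h] at h2; linarith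
        push_cast
        rw [h1]
        field_simp
      · refine ⟨2 * ⌊c * x⌋ + 1, ?_⟩
        have h1 : (⌊c * x⌋ : ℝ) = c * x - 1/2 := by
          have h2 := Int.self_sub_floor (c*x); rw [h] at h2; linarith
        push_cast
        rw [h1]
        field_simp
        ring
    rw [ae_iff]
    refine measure_mono_null ?_ hS
    intro x hx
    simp only [Set.mem_setOf_eq] at hx ⊢
    by_contra hxS
    push_neg at hxS
    obtain ⟨s, -, hds⟩ := hsaw x hxS.1 hxS.2
    exact hx hds.differentiableAt
  · intro x hd
    by_cases hx : Int.fract (c*x) = 0 ∨ Int.fract (c*x) = 1/2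
    · exact absurd hd (hkink x hx)
    · push_neg at hx
      obtain ⟨s, hs1, hYd⟩ := hsaw x hx.1 hx.2
      rw [hYd.deriv]
      have h1 : |K * s| = K := by
        rw [abs_mul, hs1, abs_of_pos hKpos, mul_one]
      have h2 := hLb x
      have h3 : |K * s| ≤ |deriv g x + K * s| + |deriv g x| := by
        calc |K * s| = |(deriv g x + K * s) + (-(deriv g x))| := by congr 1; ring
          _ ≤ |deriv g x + K * s| + |(-(deriv g x))| := abs_add_le _ _
          _ = |deriv g x + K * s| + |deriv g x| := by rw [abs_neg]
      have h4 : K = L + M + 1 := rfl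
      linarith [h3, h1]
  · have hYf : ∀ x, ‖(Y - f) x‖ ≤ 2 * η := by
      intro x
      have h1 := hgf x
      have h2 := T_nonneg (c * x)
      have h3 := T_le (c * x)
      rw [Pi.sub_apply, Real.norm_eq_abs]
      have he : Y x - f x = (g x - f x) + η * T (c * x) := by simp only [hY]; ring
      rw [he]
      calc |(g x - f x) + η * T (c * x)| ≤ |g x - f x| + |η * T (c * x)| := abs_add_le _ _
        _ ≤ 2 * η := by
            rw [abs_of_nonneg (mul_nonneg hηpos.le h2)]
            nlinarith [mul_le_mul_of_nonneg_left h3 hηpos.le]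
    have h6 : eLpNorm (Y - f) q P ≤ A * ENNReal.ofReal (2*η) :=
      eLpNorm_le_of_ae_bound (ae_of_all _ hYf)
    have h7 : A * ENNReal.ofReal (2*η) ≤ ENNReal.ofReal (ε/2) := by
      conv_lhs => rw [← ENNReal.ofReal_toReal hAtop]
      rw [← ENNReal.ofReal_mul hA0]
      apply ENNReal.ofReal_le_ofReal
      have h1 : A.toReal / (A.toReal + 1) ≤ 1 := by
        rw [div_le_one (by linarith)]; linarith
      calc A.toReal * (2 * η) = ε/2 * (A.toReal/(A.toReal+1)) := by
            rw [hη]; field_simp; ring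
        _ ≤ ε/2 * 1 := mul_le_mul_of_nonneg_left h1 (by linarith)
        _ = ε/2 := mul_one _
    have hYmeas : AEStronglyMeasurable Y P :=
      ((hgsmooth.continuous.measurable).add
        ((measurable_T.comp (measurable_id.const_mul c)).const_mul η)).aestronglyMeasurable
    have h8 : eLpNorm (Y - X) q P ≤ eLpNorm (Y - f) q P + eLpNorm (f - X) q P := by
      have hYX : Y - X = (Y - f) + (f - X) := by
        funext y; simp only [Pi.sub_apply, Pi.add_apply]; ring
      rw [hYX]
      exact eLpNorm_add_le (hYmeas.sub hfcont.aestronglyMeasurable)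
        (hfcont.aestronglyMeasurable.sub hX.1) hq1
    have h9 : eLpNorm (f - X) q P ≤ ENNReal.ofReal (ε/4) := by
      rw [eLpNorm_sub_comm]; exact hfX
    calc eLpNorm (Y - X) q P ≤ eLpNorm (Y - f) q P + eLpNorm (f - X) q P := h8
      _ ≤ ENNReal.ofReal (ε/2) + ENNReal.ofReal (ε/4) := add_le_add (h6.trans h7) h9
      _ = ENNReal.ofReal (3*ε/4) := by
          rw [← ENNReal.ofReal_add (by linarith) (by linarith)]
          congr 1
          ring
      _ < ENNReal.ofReal ε := (ENNReal.ofReal_lt_ofReal_iff hε).2 (by linarith)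
end
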